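/- Let X, Y be metric spaces with ψ : X → Y continuous, ψ⁻¹({c}) nonempty with connected components {X_j}_{j∈J}. If the component X₀ has a locally finite neighborhood V, then there exist disjoint open subsets A, B of X with X₀ ⊆ A ⊆ V and ⋃_{j≠0} X_j ⊆ B. -/

import Mathlib

lemma isClosed_connectedComponentIn_of_isClosed {X : Type*} [TopologicalSpace X]
    {F : Set X} (hF : IsClosed F) (x : X) : IsClosed (connectedComponentIn F x) := by
  by_cases hx : x ∈ F
  · rw [connectedComponentIn_eq_image hx]
    exact hF.isClosedEmbedding_subtypeVal.isClosedMap _ isClosed_connectedComponent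
  · rw [connectedComponentIn_eq_empty hx]
    exact isClosed_empty

/-- Let `X, Y` be metric spaces, `ψ : X → Y` continuous, `ψ⁻¹({c})` nonempty with connected
components `X_j`.  If the component `X₀` (containing `x₀`) has a locally finite neighborhood
`V`, then there exist disjoint open subsets `A, B` of `X` with `X₀ ⊆ A ⊆ V` and
`⋃_{j ≠ 0} X_j ⊆ B`. -/
theorem stmt_8 {X Y : Type*} [MetricSpace X] [MetricSpace Y]
    (ψ : X → Y) (hψ : Continuous ψ) (c : Y) (x₀ : X) (hx₀ : ψ x₀ = c)
    (V : Set X) (hVopen : IsOpen V)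
    (hX₀V : connectedComponentIn (ψ ⁻¹' {c}) x₀ ⊆ V)
    (hLFN : {C : Set X | (∃ x ∈ ψ ⁻¹' {c}, C = connectedComponentIn (ψ ⁻¹' {c}) x) ∧
      (C ∩ V).Nonempty}.Finite) :
    ∃ A B : Set X, IsOpen A ∧ IsOpen B ∧ Disjoint A B ∧
      connectedComponentIn (ψ ⁻¹' {c}) x₀ ⊆ A ∧ A ⊆ V ∧
      (ψ ⁻¹' {c}) \ connectedComponentIn (ψ ⁻¹' {c}) x₀ ⊆ B := by
  set S : Set X := ψ ⁻¹' {c} with hS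
  set X₀ : Set X := connectedComponentIn S x₀ with hX₀
  have hSclosed : IsClosed S := (isClosed_singleton).preimage hψ
  -- the finite family of "other" components meeting V
  set 𝒞 : Set (Set X) := {C : Set X | (∃ x ∈ S, C = connectedComponentIn S x) ∧
      (C ∩ V).Nonempty} \ {X₀} with h𝒞
  have h𝒞fin : 𝒞.Finite := hLFN.diff
  set F : Set X := ⋃₀ 𝒞 with hF
  have hFclosed : IsClosed F := by
    rw [hF, Set.sUnion_eq_biUnion]
    apply h𝒞fin.isClosed_biUnion
    rintro C ⟨⟨⟨x, hxS, rfl⟩, -⟩, -⟩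
    exact isClosed_connectedComponentIn_of_isClosed hSclosed x
  have hX₀closed : IsClosed X₀ := isClosed_connectedComponentIn_of_isClosed hSclosed x₀
  set L : Set X := F ∪ (S \ V) with hL
  have hLclosed : IsClosed L := hFclosed.union (hSclosed.sdiff hVopen)
  have hdisj : Disjoint X₀ L := by
    rw [Set.disjoint_union_right]
    constructor
    · rw [Set.disjoint_sUnion_right]
      rintro C ⟨⟨⟨x, hxS, rfl⟩, -⟩, hCne⟩
      rw [Set.disjoint_iff_inter_eq_empty]
      by_contra h
      obtain ⟨y, hy₀, hyC⟩ := Set.nonempty_iff_ne_empty.2 h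
      exact hCne (by rw [Set.mem_singleton_iff,
        connectedComponentIn_eq hyC, ← connectedComponentIn_eq hy₀])
    · exact Set.disjoint_sdiff_right.mono_left hX₀V
  obtain ⟨U₁, U₂, hU₁open, hU₂open, hX₀U₁, hLU₂, hU₁U₂⟩ :=
    NormalSpace.normal X₀ L hX₀closed hLclosed hdisj
  refine ⟨U₁ ∩ V, U₂, hU₁open.inter hVopen, hU₂open,
    hU₁U₂.mono_left Set.inter_subset_left,
    Set.subset_inter hX₀U₁ hX₀V, Set.inter_subset_right, ?_⟩
  rintro x ⟨hxS, hxX₀⟩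
  by_cases hxV : x ∈ V
  · apply hLU₂
    left
    refine Set.mem_sUnion.2 ⟨connectedComponentIn S x, ⟨⟨⟨x, hxS, rfl⟩,
      ⟨x, mem_connectedComponentIn hxS, hxV⟩⟩, ?_⟩, mem_connectedComponentIn hxS⟩
    simp only [Set.mem_singleton_iff]
    intro h
    exact hxX₀ (h ▸ mem_connectedComponentIn hxS)
  · exact hLU₂ (Or.inr ⟨hxS, hxV⟩)
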